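/- (Theorem 1) Let H be a complex vector space carrying two commuting Clifford families: γ_1^1,…,γ_1^{n_1} of signature η_1 and γ_2^1,…,γ_2^{n_2} of signature η_2. Define, for combined indices A,B ∈ {1,…,n_1+n_2}: T^{ab} = −½ γ_1^a γ_1^b for a ≠ b in {1,…,n_1} (and T^{aa}=0); T^{n_1+α, n_1+β} = ½ γ_2^α γ_2^β for α ≠ β (and zero when α = β); T^{a, n_1+β} = ½ γ_1^a γ_2^β; and T^{n_1+α, b} = −½ γ_1^b γ_2^α. Define the combined signs η^A = −η_1^a for A = a ≤ n_1 and η^A = η_2^α for A = n_1+α. Then for all A,B,C,D: [T^{AB}, T^{CD}] = η^B δ^{BC} T^{AD} − η^A δ^{AC} T^{BD} + η^B δ^{BD} T^{CA} − η^A δ^{AD} T^{CB}. In other words, the quadratic monomials in pairs of generators taken from the two commuting Clifford families determine a representation on H of the Lie algebra so(q_1+p_2, p_1+q_2), where (p_i, q_i) counts the +1 and −1 signs of η_i. -/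
import Mathlib

set_option maxHeartbeats 4000000

section
variable {R : Type*} [Ring R] [Algebra ℂ R]

private lemma clifford_key (a b c d : R) (p P q Q r R' s S' : ℂ)
    (h1 : c * a = p • (a * c) + P • 1)
    (h2 : c * b = q • (b * c) + Q • 1)
    (h3 : d * a = r • (a * d) + R' • 1)
    (h4 : d * b = s • (b * d) + S' • 1) :
    (c * d) * (a * b)
      = (p * q * r * s) • ((a * b) * (c * d)) + (p * r * s * Q) • (a * d)
        + (p * r * S') • (a * c) + (P * r * s) • (b * d)
        + (P * S' * r) • (1 : R) + R' • (c * b) := by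
  have e1 : (c * d) * (a * b) = c * (d * a) * b := by noncomm_ring
  rw [e1, h3]
  simp only [mul_add, add_mul, mul_smul_comm, smul_mul_assoc, mul_one, one_mul]
  have e2 : c * (a * d) * b = (c * a) * (d * b) := by noncomm_ring
  rw [e2, h1, h4]
  simp only [mul_add, add_mul, mul_smul_comm, smul_mul_assoc, smul_smul, smul_add,
    mul_one, one_mul]
  have e3 : (a * c) * (b * d) = a * (c * b) * d := by noncomm_ring
  rw [e3, h2]
  simp only [mul_add, add_mul, mul_smul_comm, smul_mul_assoc, smul_smul, smul_add,
    mul_one, one_mul]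
  have e4 : a * (b * c) * d = (a * b) * (c * d) := by noncomm_ring
  rw [e4]
  module

end



/-- Theorem 1 of the paper: two commuting Clifford families of signatures
`η₁` (type `(p₁,q₁)`) and `η₂` (type `(p₂,q₂)`) on a complex vector space `H` determine,
via the quadratic monomials in the combined generators, a representation on `H` of the
Lie algebra `so(q₁+p₂, p₁+q₂)`, i.e. the generators `T^{AB}` satisfy the `so`-commutation
relations for the combined signature `η = (−η₁) ⊕ η₂`. -/
theorem commuting_clifford_so_representation
    {H : Type*} [AddCommGroup H] [Module ℂ H] {n₁ n₂ : ℕ}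
    (γ₁ : Fin n₁ → Module.End ℂ H) (η₁ : Fin n₁ → ℂ)
    (γ₂ : Fin n₂ → Module.End ℂ H) (η₂ : Fin n₂ → ℂ)
    (hη₁ : ∀ a, η₁ a = 1 ∨ η₁ a = -1)
    (hη₂ : ∀ α, η₂ α = 1 ∨ η₂ α = -1)
    (hcl₁ : ∀ a b, γ₁ a * γ₁ b + γ₁ b * γ₁ a
      = (2 * η₁ a * (if a = b then 1 else 0)) • (1 : Module.End ℂ H))
    (hcl₂ : ∀ α β, γ₂ α * γ₂ β + γ₂ β * γ₂ α
      = (2 * η₂ α * (if α = β then 1 else 0)) • (1 : Module.End ℂ H))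
    (hcomm : ∀ a α, γ₁ a * γ₂ α = γ₂ α * γ₁ a)
    -- combined generators indexed by `Fin n₁ ⊕ Fin n₂` (i.e. `{1,…,n₁+n₂}`)
    (T : Fin n₁ ⊕ Fin n₂ → Fin n₁ ⊕ Fin n₂ → Module.End ℂ H)
    (hT₁₁ : ∀ a b : Fin n₁,
      T (.inl a) (.inl b) = if a = b then 0 else (-(1 / 2) : ℂ) • (γ₁ a * γ₁ b))
    (hT₂₂ : ∀ α β : Fin n₂,
      T (.inr α) (.inr β) = if α = β then 0 else ((1 / 2) : ℂ) • (γ₂ α * γ₂ β))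
    (hT₁₂ : ∀ (a : Fin n₁) (β : Fin n₂),
      T (.inl a) (.inr β) = ((1 / 2) : ℂ) • (γ₁ a * γ₂ β))
    (hT₂₁ : ∀ (α : Fin n₂) (b : Fin n₁),
      T (.inr α) (.inl b) = (-(1 / 2) : ℂ) • (γ₁ b * γ₂ α))
    -- combined signature `η = (−η₁) ⊕ η₂`
    (η : Fin n₁ ⊕ Fin n₂ → ℂ)
    (hHη₁ : ∀ a : Fin n₁, η (.inl a) = -η₁ a)
    (hHη₂ : ∀ α : Fin n₂, η (.inr α) = η₂ α) :
    ∀ A B C D : Fin n₁ ⊕ Fin n₂,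
      T A B * T C D - T C D * T A B =
        (η B * (if B = C then 1 else 0)) • T A D
        - (η A * (if A = C then 1 else 0)) • T B D
        + (η B * (if B = D then 1 else 0)) • T C A
        - (η A * (if A = D then 1 else 0)) • T C B := by
  intro A B C D
  have hsq₁ : ∀ a, γ₁ a * γ₁ a = (η₁ a) • (1 : Module.End ℂ H) := by
    intro a
    have h := hcl₁ a a
    rw [if_pos rfl] at h
    calc γ₁ a * γ₁ a = ((1/2 : ℂ)) • (γ₁ a * γ₁ a + γ₁ a * γ₁ a) := by module
      _ = ((1/2 : ℂ)) • ((2 * η₁ a * 1) • (1 : Module.End ℂ H)) := by rw [h]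
      _ = (η₁ a) • 1 := by module
  have hsq₂ : ∀ α, γ₂ α * γ₂ α = (η₂ α) • (1 : Module.End ℂ H) := by
    intro α
    have h := hcl₂ α α
    rw [if_pos rfl] at h
    calc γ₂ α * γ₂ α = ((1/2 : ℂ)) • (γ₂ α * γ₂ α + γ₂ α * γ₂ α) := by module
      _ = ((1/2 : ℂ)) • ((2 * η₂ α * 1) • (1 : Module.End ℂ H)) := by rw [h]
      _ = (η₂ α) • 1 := by module
  -- the combined family and signs
  have hswap : ∀ X Y : Fin n₁ ⊕ Fin n₂,
      Sum.elim γ₁ γ₂ X * Sum.elim γ₁ γ₂ Y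
        = (-(Sum.elim (fun _ => (-1:ℂ)) (fun _ => (1:ℂ)) X *
              Sum.elim (fun _ => (-1:ℂ)) (fun _ => (1:ℂ)) Y))
            • (Sum.elim γ₁ γ₂ Y * Sum.elim γ₁ γ₂ X)
          + ((2:ℂ) * (if X = Y then (1:ℂ) else 0) *
              Sum.elim (fun _ => (-1:ℂ)) (fun _ => (1:ℂ)) Y * η Y)
            • (1 : Module.End ℂ H) := by
    rintro (a | α) (b | β) <;>
      simp only [Sum.elim_inl, Sum.elim_inr, Sum.inl.injEq, Sum.inr.injEq,
        reduceCtorEq, if_false, hHη₁, hHη₂]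
    · by_cases hab : a = b
      · subst hab
        rw [if_pos rfl]
        have h := hcl₁ a a
        rw [if_pos rfl] at h
        calc γ₁ a * γ₁ a = (γ₁ a * γ₁ a + γ₁ a * γ₁ a) - γ₁ a * γ₁ a := by abel
          _ = (2 * η₁ a * 1) • (1 : Module.End ℂ H) - γ₁ a * γ₁ a := by rw [h]
          _ = _ := by module
      · rw [if_neg hab]
        have h := hcl₁ a b
        rw [if_neg hab] at h
        calc γ₁ a * γ₁ b = (γ₁ a * γ₁ b + γ₁ b * γ₁ a) - γ₁ b * γ₁ a := by abel
          _ = (2 * η₁ a * 0) • (1 : Module.End ℂ H) - γ₁ b * γ₁ a := by rw [h]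
          _ = _ := by module
    · rw [hcomm a β]; module
    · rw [← hcomm b α]; module
    · by_cases hab : α = β
      · subst hab
        rw [if_pos rfl]
        have h := hcl₂ α α
        rw [if_pos rfl] at h
        calc γ₂ α * γ₂ α = (γ₂ α * γ₂ α + γ₂ α * γ₂ α) - γ₂ α * γ₂ α := by abel
          _ = (2 * η₂ α * 1) • (1 : Module.End ℂ H) - γ₂ α * γ₂ α := by rw [h]
          _ = _ := by module
      · rw [if_neg hab]
        have h := hcl₂ α β
        rw [if_neg hab] at h
        calc γ₂ α * γ₂ β = (γ₂ α * γ₂ β + γ₂ β * γ₂ α) - γ₂ β * γ₂ α := by abel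
          _ = (2 * η₂ α * 0) • (1 : Module.End ℂ H) - γ₂ β * γ₂ α := by rw [h]
          _ = _ := by module
  have hTS : ∀ X Y : Fin n₁ ⊕ Fin n₂,
      T X Y = ((1/2 : ℂ) * Sum.elim (fun _ => (-1:ℂ)) (fun _ => (1:ℂ)) Y)
          • (Sum.elim γ₁ γ₂ X * Sum.elim γ₁ γ₂ Y)
        + ((if X = Y then (1:ℂ) else 0) * (-(1/2)) * η X) • (1 : Module.End ℂ H) := by
    rintro (a | α) (b | β) <;>
      simp only [Sum.elim_inl, Sum.elim_inr, Sum.inl.injEq, Sum.inr.injEq,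
        reduceCtorEq, if_false, hHη₁, hHη₂, hT₁₁, hT₂₂, hT₁₂, hT₂₁]
    · by_cases hab : a = b
      · subst hab
        rw [if_pos rfl, if_pos rfl, hsq₁]
        module
      · rw [if_neg hab, if_neg hab]
        module
    · module
    · rw [hcomm b α]; module
    · by_cases hab : α = β
      · subst hab
        rw [if_pos rfl, if_pos rfl, hsq₂]
        module
      · rw [if_neg hab, if_neg hab]
        module
  have hK := clifford_key (Sum.elim γ₁ γ₂ A) (Sum.elim γ₁ γ₂ B)
    (Sum.elim γ₁ γ₂ C) (Sum.elim γ₁ γ₂ D) _ _ _ _ _ _ _ _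
    (hswap C A) (hswap C B) (hswap D A) (hswap D B)
  rw [hTS A B, hTS C D, hTS A D, hTS B D, hTS C A, hTS C B]
  simp only [mul_add, add_mul, smul_mul_assoc, mul_smul_comm, smul_smul, smul_add,
    mul_one, one_mul]
  rw [hK, hswap A C]
  have δcomm : ∀ X Y : Fin n₁ ⊕ Fin n₂, (if X = Y then (1:ℂ) else 0) = (if Y = X then 1 else 0) := by
    intro X Y
    by_cases h : X = Y
    · subst h; simp
    · rw [if_neg h, if_neg (Ne.symm h)]
  simp only [δcomm C A, δcomm C B, δcomm D A, δcomm D B]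
  clear hK hswap hTS hsq₁ hsq₂ hcl₁ hcl₂ hcomm hT₁₁ hT₂₂ hT₁₂ hT₂₁ hη₁ hη₂ δcomm T
  rcases A with a | α <;> rcases B with b | β <;> rcases C with c | γ' <;> rcases D with d | δ' <;>
    simp only [Sum.elim_inl, Sum.elim_inr, Sum.inl.injEq, Sum.inr.injEq,
      reduceCtorEq, reduceIte, hHη₁, hHη₂] <;>
    split_ifs <;> subst_vars <;> first | module | simp_all
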